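/- Let |ψ_n⟩ = (|10...0⟩+|01...0⟩)/√2 and |GHZ_n⟩ = (|0...0⟩+|1...1⟩)/√2 be n-qubit states, and let ρ = p|ψ_n⟩⟨ψ_n| + (1−p)|GHZ_n⟩⟨GHZ_n| with 1/2 < p < 1. Then the two-qubit marginal ρ_{{1,2}} equals (p/2)(|01⟩+|10⟩)(⟨01|+⟨10|) + ((1−p)/2)|00⟩⟨00| + ((1−p)/2)|11⟩⟨11|, and this marginal has a negative partial transpose, hence is entangled. -/

import Mathlib

open scoped Matrix ComplexOrder Kronecker

noncomputable section

namespace Stmt3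

/-- `|ψ_n⟩ = (|10⋯0⟩ + |01⋯0⟩)/√2` as an `n`-qubit vector. -/
def psiVec (n : ℕ) : (Fin n → Fin 2) → ℂ := fun f =>
  if f = (fun (i : Fin n) => if (i : ℕ) = 0 then (1 : Fin 2) else 0) ∨
     f = (fun (i : Fin n) => if (i : ℕ) = 1 then (1 : Fin 2) else 0) then
    ((Real.sqrt 2)⁻¹ : ℝ) else 0

/-- `|GHZ_n⟩ = (|0⋯0⟩ + |1⋯1⟩)/√2`. -/
def ghzVec (n : ℕ) : (Fin n → Fin 2) → ℂ := fun f =>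
  if f = (fun _ => 0) ∨ f = (fun _ => 1) then ((Real.sqrt 2)⁻¹ : ℝ) else 0

/-- Extend a two-qubit configuration on qubits `0, 1` by a configuration `h` on the
remaining qubits. -/
def ext (n : ℕ) (a : Fin 2 × Fin 2) (h : {i : Fin n // 1 < (i : ℕ)} → Fin 2) :
    Fin n → Fin 2 := fun i =>
  if h0 : (i : ℕ) = 0 then a.1
  else if h1 : (i : ℕ) = 1 then a.2
  else h ⟨i, by omega⟩

/-- The marginal `ρ_{{1,2}}` on the first two qubits (partial trace over qubits `3,…,n`). -/
def marg12 (n : ℕ) (ρ : Matrix (Fin n → Fin 2) (Fin n → Fin 2) ℂ) :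
    Matrix (Fin 2 × Fin 2) (Fin 2 × Fin 2) ℂ :=
  fun a c => ∑ h : {i : Fin n // 1 < (i : ℕ)} → Fin 2, ρ (ext n a h) (ext n c h)

/-- Partial transpose over the second qubit of a two-qubit matrix. -/
def pt (M : Matrix (Fin 2 × Fin 2) (Fin 2 × Fin 2) ℂ) :
    Matrix (Fin 2 × Fin 2) (Fin 2 × Fin 2) ℂ :=
  fun x y => M (x.1, y.2) (y.1, x.2)

/-- Separability of a two-qubit state. -/
def Sep2 (M : Matrix (Fin 2 × Fin 2) (Fin 2 × Fin 2) ℂ) : Prop :=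
  ∃ (k : ℕ) (w : Fin k → ℝ) (A B : Fin k → Matrix (Fin 2) (Fin 2) ℂ),
    (∀ j, 0 ≤ w j) ∧ (∀ j, (A j).PosSemidef ∧ (B j).PosSemidef) ∧
    M = ∑ j, (w j : ℂ) • (A j ⊗ₖ B j)

/-- `|01⟩ + |10⟩` (unnormalized). -/
def u : Fin 2 × Fin 2 → ℂ := fun x => if x = (0, 1) ∨ x = (1, 0) then 1 else 0

def v00 : Fin 2 × Fin 2 → ℂ := fun x => if x = (0, 0) then 1 else 0

def v11 : Fin 2 × Fin 2 → ℂ := fun x => if x = (1, 1) then 1 else 0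

lemma ext_eq_iff {n : ℕ} (hn : 3 ≤ n) (a : Fin 2 × Fin 2)
    (h : {i : Fin n // 1 < (i : ℕ)} → Fin 2) (g : Fin n → Fin 2) :
    ext n a h = g ↔
      a.1 = g ⟨0, by omega⟩ ∧ a.2 = g ⟨1, by omega⟩ ∧ ∀ j, h j = g j.1 := by
  constructor
  · intro H
    refine ⟨?_, ?_, fun j => ?_⟩
    · rw [← H]; simp [ext]
    · rw [← H]; simp [ext]
    · rw [← H]
      have hj := j.2
      simp only [ext]
      rw [dif_neg (by omega), dif_neg (by omega)]
  · rintro ⟨h1, h2, h3⟩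
    funext i
    simp only [ext]
    split_ifs with H0 H1
    · have : i = ⟨0, by omega⟩ := Fin.ext H0
      rw [this] at *; exact h1
    · have : i = ⟨1, by omega⟩ := Fin.ext H1
      rw [this] at *; exact h2
    · exact h3 ⟨i, by omega⟩

lemma psi_ext {n : ℕ} (hn : 3 ≤ n) (a : Fin 2 × Fin 2)
    (h : {i : Fin n // 1 < (i : ℕ)} → Fin 2) :
    psiVec n (ext n a h) =
      if h = (fun _ => 0) then ((Real.sqrt 2 : ℝ) : ℂ)⁻¹ * u a else 0 := by
  have key0 : ext n a h = (fun (i : Fin n) => if (i : ℕ) = 0 then (1 : Fin 2) else 0) ↔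
      a = (1, 0) ∧ h = (fun _ => 0) := by
    rw [ext_eq_iff hn]
    constructor
    · rintro ⟨h1, h2, h3⟩
      refine ⟨Prod.ext (by simpa using h1) (by simpa using h2),
        funext fun j => ?_⟩
      have hj := j.2
      rw [h3 j]
      exact if_neg (by omega)
    · rintro ⟨rfl, rfl⟩
      refine ⟨by simp, by simp, fun j => ?_⟩
      have hj := j.2
      exact (if_neg (by omega)).symm
  have key1 : ext n a h = (fun (i : Fin n) => if (i : ℕ) = 1 then (1 : Fin 2) else 0) ↔
      a = (0, 1) ∧ h = (fun _ => 0) := by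
    rw [ext_eq_iff hn]
    constructor
    · rintro ⟨h1, h2, h3⟩
      refine ⟨Prod.ext (by simpa using h1) (by simpa using h2),
        funext fun j => ?_⟩
      have hj := j.2
      rw [h3 j]
      exact if_neg (by omega)
    · rintro ⟨rfl, rfl⟩
      refine ⟨by simp, by simp, fun j => ?_⟩
      have hj := j.2
      exact (if_neg (by omega)).symm
  unfold psiVec u
  by_cases hz : h = (fun _ => 0)
  · by_cases ha : a = (0, 1) ∨ a = (1, 0)
    · rw [if_pos, if_pos hz, if_pos ha]
      · push_cast; ring
      · rcases ha with ha | ha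
        · exact Or.inr (key1.mpr ⟨ha, hz⟩)
        · exact Or.inl (key0.mpr ⟨ha, hz⟩)
    · rw [if_neg, if_pos hz, if_neg ha]
      · simp
      · rw [key0, key1]
        rintro (⟨ha', -⟩ | ⟨ha', -⟩)
        · exact ha (Or.inr ha')
        · exact ha (Or.inl ha')
  · rw [if_neg, if_neg hz]
    rw [key0, key1]
    rintro (⟨-, hz'⟩ | ⟨-, hz'⟩) <;> exact hz hz'

lemma ghz_ext {n : ℕ} (hn : 3 ≤ n) (a : Fin 2 × Fin 2)
    (h : {i : Fin n // 1 < (i : ℕ)} → Fin 2) :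
    ghzVec n (ext n a h) =
      if h = (fun _ => 0) then ((Real.sqrt 2 : ℝ) : ℂ)⁻¹ * v00 a
      else if h = (fun _ => 1) then ((Real.sqrt 2 : ℝ) : ℂ)⁻¹ * v11 a
      else 0 := by
  have hne : (fun _ => 0 : {i : Fin n // 1 < (i : ℕ)} → Fin 2) ≠ (fun _ => 1) := by
    intro H
    have := congrFun H ⟨⟨2, by omega⟩, by norm_num⟩
    simp at this
  have key0 : ext n a h = (fun _ => (0 : Fin 2)) ↔
      a = (0, 0) ∧ h = (fun _ => 0) := by
    rw [ext_eq_iff hn]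
    constructor
    · rintro ⟨h1, h2, h3⟩
      exact ⟨Prod.ext h1 h2, funext fun j => h3 j⟩
    · rintro ⟨rfl, rfl⟩
      exact ⟨rfl, rfl, fun j => rfl⟩
  have key1 : ext n a h = (fun _ => (1 : Fin 2)) ↔
      a = (1, 1) ∧ h = (fun _ => 1) := by
    rw [ext_eq_iff hn]
    constructor
    · rintro ⟨h1, h2, h3⟩
      exact ⟨Prod.ext h1 h2, funext fun j => h3 j⟩
    · rintro ⟨rfl, rfl⟩
      exact ⟨rfl, rfl, fun j => rfl⟩
  unfold ghzVec v00 v11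
  by_cases hz : h = (fun _ => 0)
  · rw [if_pos hz]
    by_cases ha : a = (0, 0)
    · rw [if_pos, if_pos ha]
      · push_cast; ring
      · exact Or.inl (key0.mpr ⟨ha, hz⟩)
    · rw [if_neg, if_neg ha]
      · simp
      · rw [key0, key1]
        rintro (⟨ha', -⟩ | ⟨-, hz'⟩)
        · exact ha ha'
        · exact hne (hz ▸ hz')
  · rw [if_neg hz]
    by_cases ho : h = (fun _ => 1)
    · rw [if_pos ho]
      by_cases ha : a = (1, 1)
      · rw [if_pos, if_pos ha]
        · push_cast; ring
        · exact Or.inr (key1.mpr ⟨ha, ho⟩)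
      · rw [if_neg, if_neg ha]
        · simp
        · rw [key0, key1]
          rintro (⟨-, hz'⟩ | ⟨ha', -⟩)
          · exact hz hz'
          · exact ha ha'
    · rw [if_neg ho, if_neg]
      rw [key0, key1]
      rintro (⟨-, hz'⟩ | ⟨-, ho'⟩)
      · exact hz hz'
      · exact ho ho'

lemma conjTranspose_kron (A B : Matrix (Fin 2) (Fin 2) ℂ) :
    (A ⊗ₖ B)ᴴ = Aᴴ ⊗ₖ Bᴴ := by
  ext ⟨x1, x2⟩ ⟨y1, y2⟩
  simp [Matrix.conjTranspose_apply, Matrix.kroneckerMap_apply, mul_comm]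

lemma kron_psd {A B : Matrix (Fin 2) (Fin 2) ℂ} (hA : A.PosSemidef)
    (hB : B.PosSemidef) : (A ⊗ₖ B).PosSemidef := by
  exact hA.kronecker hB

lemma star_u (c : Fin 2 × Fin 2) : star (u c) = u c := by
  unfold u; split <;> simp

lemma star_v00' (c : Fin 2 × Fin 2) : star (v00 c) = v00 c := by
  unfold v00; split <;> simp

lemma star_v11' (c : Fin 2 × Fin 2) : star (v11 c) = v11 c := by
  unfold v11; split <;> simp

lemma star_sqrt2inv : star (((Real.sqrt 2 : ℝ) : ℂ)⁻¹) = ((Real.sqrt 2 : ℝ) : ℂ)⁻¹ := by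
  simp [Complex.star_def, Complex.conj_ofReal]

lemma sqrt2inv_sq : ((Real.sqrt 2 : ℝ) : ℂ)⁻¹ * ((Real.sqrt 2 : ℝ) : ℂ)⁻¹ = 1 / 2 := by
  rw [← mul_inv, ← Complex.ofReal_mul, Real.mul_self_sqrt (by norm_num : (0:ℝ) ≤ 2)]
  norm_num

set_option maxHeartbeats 1000000 in
lemma not_psd_pt (p : ℝ) (hp0 : 1 / 2 < p) :
    ¬ (pt (((p / 2 : ℝ) : ℂ) • Matrix.vecMulVec u (star u) +
      (((1 - p) / 2 : ℝ) : ℂ) • Matrix.vecMulVec v00 (star v00) +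
      (((1 - p) / 2 : ℝ) : ℂ) • Matrix.vecMulVec v11 (star v11))).PosSemidef := by
  intro hPSD
  set w : Fin 2 × Fin 2 → ℂ := fun x => if x = (0, 0) then 1
    else if x = (1, 1) then -1 else 0 with hw
  have h := hPSD.dotProduct_mulVec_nonneg w
  have hval : dotProduct (star w)
      ((pt (((p / 2 : ℝ) : ℂ) • Matrix.vecMulVec u (star u) +
      (((1 - p) / 2 : ℝ) : ℂ) • Matrix.vecMulVec v00 (star v00) +
      (((1 - p) / 2 : ℝ) : ℂ) • Matrix.vecMulVec v11 (star v11))) *ᵥ w) =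
      ((1 - 2 * p : ℝ) : ℂ) := by
    simp only [dotProduct, Matrix.mulVec, dotProduct,
      Fintype.sum_prod_type, Fin.sum_univ_two, pt, Matrix.add_apply,
      Matrix.smul_apply, Matrix.vecMulVec_apply, Pi.star_apply, hw,
      u, v00, v11, smul_eq_mul]
    norm_num [Prod.ext_iff]
    ring
  rw [hval, Complex.zero_le_real] at h
  linarith

lemma smul_psd {M : Matrix (Fin 2 × Fin 2) (Fin 2 × Fin 2) ℂ} {w : ℝ}
    (hw : 0 ≤ w) (hM : M.PosSemidef) : ((w : ℂ) • M).PosSemidef := by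
  rw [Matrix.posSemidef_iff_dotProduct_mulVec]
  constructor
  · unfold Matrix.IsHermitian
    rw [Matrix.conjTranspose_smul, hM.1.eq]
    congr 1
    simp
  · intro x
    rw [Matrix.smul_mulVec, dotProduct_smul]
    have hq := hM.dotProduct_mulVec_nonneg x
    have hw' : (0 : ℂ) ≤ (w : ℂ) := by rw [Complex.zero_le_real]; exact hw
    exact mul_nonneg hw' hq

lemma psd_zero : (0 : Matrix (Fin 2 × Fin 2) (Fin 2 × Fin 2) ℂ).PosSemidef :=
  ⟨Matrix.isHermitian_zero, fun x => by simp [Matrix.zero_mulVec]⟩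

lemma pt_kron (A B : Matrix (Fin 2) (Fin 2) ℂ) : pt (A ⊗ₖ B) = A ⊗ₖ Bᵀ := by
  ext ⟨x1, x2⟩ ⟨y1, y2⟩
  simp [pt, Matrix.kroneckerMap_apply, Matrix.transpose_apply]

/-- for `ρ = p|ψ_n⟩⟨ψ_n| + (1−p)|GHZ_n⟩⟨GHZ_n|` with `1/2 < p < 1`, the
two-qubit marginal `ρ_{{1,2}}` equals
`(p/2)(|01⟩+|10⟩)(⟨01|+⟨10|) + ((1−p)/2)|00⟩⟨00| + ((1−p)/2)|11⟩⟨11|`, its partial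
transpose is not positive semidefinite (NPT), and hence it is entangled. -/
theorem marginal_npt_entangled
    (n : ℕ) (hn : 3 ≤ n) (p : ℝ) (hp0 : 1 / 2 < p) (hp1 : p < 1)
    (ρ : Matrix (Fin n → Fin 2) (Fin n → Fin 2) ℂ)
    (hρ : ρ = (p : ℂ) • Matrix.vecMulVec (psiVec n) (star (psiVec n)) +
      ((1 - p : ℝ) : ℂ) • Matrix.vecMulVec (ghzVec n) (star (ghzVec n))) :
    marg12 n ρ = ((p / 2 : ℝ) : ℂ) • Matrix.vecMulVec u (star u) +
      (((1 - p) / 2 : ℝ) : ℂ) • Matrix.vecMulVec v00 (star v00) +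
      (((1 - p) / 2 : ℝ) : ℂ) • Matrix.vecMulVec v11 (star v11) ∧
    ¬ (pt (marg12 n ρ)).PosSemidef ∧ ¬ Sep2 (marg12 n ρ) := by
  have hne : (fun _ => 0 : {i : Fin n // 1 < (i : ℕ)} → Fin 2) ≠ (fun _ => 1) := by
    intro H
    have := congrFun H ⟨⟨2, by omega⟩, by norm_num⟩
    simp at this
  have hmarg : marg12 n ρ = ((p / 2 : ℝ) : ℂ) • Matrix.vecMulVec u (star u) +
      (((1 - p) / 2 : ℝ) : ℂ) • Matrix.vecMulVec v00 (star v00) +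
      (((1 - p) / 2 : ℝ) : ℂ) • Matrix.vecMulVec v11 (star v11) := by
    funext a c
    have key : ∀ F : ({i : Fin n // 1 < (i : ℕ)} → Fin 2) → ℂ,
        (∀ h, h ≠ (fun _ => 0) → h ≠ (fun _ => 1) → F h = 0) →
        ∑ h, F h = F (fun _ => 0) + F (fun _ => 1) := by
      intro F hF
      rw [← Finset.sum_pair hne]
      symm
      apply Finset.sum_subset (Finset.subset_univ _)
      intro h _ hh
      simp only [Finset.mem_insert, Finset.mem_singleton, not_or] at hh
      exact hF h hh.1 hh.2
    show (∑ h, ρ (ext n a h) (ext n c h)) = _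
    rw [key]
    · subst hρ
      simp only [Matrix.add_apply, Matrix.smul_apply, Matrix.vecMulVec_apply,
        Pi.star_apply, smul_eq_mul, psi_ext hn, ghz_ext hn, hne, hne.symm,
        if_true, if_false, eq_self_iff_true, ite_true, ite_false, ne_eq,
        not_false_iff]
      simp only [star_mul', star_u, star_v00', star_v11', star_sqrt2inv,
        star_zero, mul_zero, zero_mul, add_zero, zero_add]
      push_cast
      ring_nf
      rw [show ((Real.sqrt 2 : ℝ) : ℂ)⁻¹ ^ 2 = 1 / 2 by rw [sq]; exact sqrt2inv_sq]
      ring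
    · intro h h0 h1
      subst hρ
      simp only [Matrix.add_apply, Matrix.smul_apply, Matrix.vecMulVec_apply,
        Pi.star_apply, smul_eq_mul, psi_ext hn, ghz_ext hn, if_neg h0, if_neg h1]
      simp
  refine ⟨hmarg, ?_, ?_⟩
  · rw [hmarg]
    exact not_psd_pt p hp0
  · rintro ⟨k, w, A, B, hw, hAB, hM⟩
    have hpt : (pt (∑ j, (w j : ℂ) • (A j ⊗ₖ B j))).PosSemidef := by
      have heq : pt (∑ j, (w j : ℂ) • (A j ⊗ₖ B j)) =
          ∑ j, (w j : ℂ) • (A j ⊗ₖ (B j)ᵀ) := by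
        funext x y
        simp only [pt, Matrix.sum_apply, Matrix.smul_apply]
        refine Finset.sum_congr rfl fun j _ => ?_
        have h3 := congrFun (congrFun (pt_kron (A j) (B j)) x) y
        simp only [pt] at h3
        rw [h3]
      rw [heq]
      apply Finset.sum_induction _ Matrix.PosSemidef
        (fun _ _ hx hy => hx.add hy) psd_zero
      intro j _
      exact smul_psd (hw j) (kron_psd (hAB j).1 (hAB j).2.transpose)
    rw [← hM, hmarg] at hpt
    exact not_psd_pt p hp0 hpt

end Stmt3

end
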